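/- Let μ₁, μ₂ ∈ ℝ and σ₁, σ₂ > 0, and for j, k ∈ ℤ define μ(j,k) = ((μ₁ + 2πj) σ₂² + (μ₂ + 2πk) σ₁²)/(σ₁² + σ₂²), σ̄ = √(σ₁² σ₂² / (σ₁² + σ₂²)), and w(j,k) = exp(−((μ₁ + 2πj) − (μ₂ + 2πk))² / (2(σ₁² + σ₂²))) / √(2π(σ₁² + σ₂²)). Then the normalization constant of the product of the two wrapped normal densities satisfies ∫_0^{2π} f_WN(x; μ₁, σ₁) · f_WN(x; μ₂, σ₂) dx = ∑_{j,k ∈ ℤ} w(j,k) ∫_0^{2π} N(x; μ(j,k), σ̄) dx. -/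

import Mathlib

open MeasureTheory

/-- Wrapped normal density with location `μ` and concentration `σ`. -/
noncomputable def wnDensity (μ σ x : ℝ) : ℝ :=
  (1 / (Real.sqrt (2 * Real.pi) * σ)) *
    ∑' k : ℤ, Real.exp (-(x - μ + 2 * Real.pi * (k : ℝ)) ^ 2 / (2 * σ ^ 2))

/-- One-dimensional Gaussian density with mean `μ` and standard deviation `σ`. -/
noncomputable def gaussDensity (μ σ x : ℝ) : ℝ :=
  (1 / (Real.sqrt (2 * Real.pi) * σ)) * Real.exp (-(x - μ) ^ 2 / (2 * σ ^ 2))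

section Aux

open Real

lemma WN.summable_geo_int {r : ℝ} (h0 : 0 ≤ r) (h1 : r < 1) :
    Summable (fun j : ℤ => r ^ j.natAbs) := by
  apply Summable.of_nat_of_neg
  · simpa using summable_geometric_of_lt_one h0 h1
  · simpa using summable_geometric_of_lt_one h0 h1

lemma WN.natAbs_le_sq (j : ℤ) : (j.natAbs : ℝ) ≤ (j : ℝ) ^ 2 := by
  have h1 : ((j.natAbs : ℝ)) = |(j : ℝ)| := by simp [Nat.cast_natAbs]
  have h2 : ((j : ℝ))^2 = |(j:ℝ)|^2 := (sq_abs _).symm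
  rw [h1, h2]
  rcases le_or_gt 1 (|(j:ℝ)|) with h | h
  · nlinarith
  · have : |(j:ℝ)| = 0 := by
      have := abs_nonneg (j:ℝ)
      have hj : (j.natAbs : ℝ) < 1 := by rw [h1] at *; linarith
      have : j.natAbs = 0 := by exact_mod_cast Nat.lt_one_iff.mp (by exact_mod_cast hj)
      rw [← h1, this]; simp
    rw [this]; simp

lemma WN.summable_exp_sq (t c : ℝ) (hc : 0 < c) :
    Summable fun j : ℤ => Real.exp (-(t + 2 * π * j) ^ 2 / c) := by
  have hr0 : (0:ℝ) ≤ Real.exp (-(2 * π ^ 2) / c) := (Real.exp_pos _).le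
  have hr1 : Real.exp (-(2 * π ^ 2) / c) < 1 := by
    rw [Real.exp_lt_one_iff]
    have := Real.pi_pos
    apply div_neg_of_neg_of_pos _ hc
    nlinarith
  apply Summable.of_nonneg_of_le (fun j => (Real.exp_pos _).le)
    (fun j => ?_) (((WN.summable_geo_int hr0 hr1).mul_left (Real.exp (t^2/c))))
  rw [← Real.exp_nat_mul, ← Real.exp_add]
  apply Real.exp_le_exp.2
  rw [div_le_iff₀ hc] at *
  have hA := WN.natAbs_le_sq j
  have hπ := Real.pi_pos
  have key : -(t + 2*π*j)^2 ≤ t^2 - 2*π^2*(j:ℝ)^2 := by nlinarith [sq_nonneg (t + π*j)]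
  have : (t^2/c + (j.natAbs:ℝ) * (-(2*π^2)/c)) * c = t^2 - 2*π^2*(j.natAbs:ℝ) := by
    field_simp; ring
  rw [this]
  nlinarith

lemma WN.gauss_nonneg (μ σ x : ℝ) (hσ : 0 < σ) : 0 ≤ gaussDensity μ σ x := by
  unfold gaussDensity; positivity

lemma WN.gauss_continuous (μ σ : ℝ) : Continuous (gaussDensity μ σ) := by
  unfold gaussDensity
  fun_prop

lemma WN.summable_gauss (μ σ x : ℝ) (hσ : 0 < σ) :
    Summable fun j : ℤ => gaussDensity (μ + 2 * π * j) σ x := by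
  unfold gaussDensity
  apply Summable.mul_left
  have h := WN.summable_exp_sq (x - μ) (2 * σ ^ 2) (by positivity)
  have h2 : Summable fun j : ℤ =>
      Real.exp (-((x - μ) + 2 * π * (-j : ℤ)) ^ 2 / (2 * σ ^ 2)) :=
    ((Equiv.neg ℤ).summable_iff.mpr h)
  apply h2.congr
  intro j
  push_cast
  ring_nf

lemma WN.wn_eq (μ σ x : ℝ) :
    wnDensity μ σ x = ∑' j : ℤ, gaussDensity (μ + 2 * π * j) σ x := by
  unfold wnDensity gaussDensity
  rw [tsum_mul_left]
  congr 1
  have := (Equiv.neg ℤ).tsum_eq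
    (fun k : ℤ => Real.exp (-(x - μ + 2 * Real.pi * (k : ℝ)) ^ 2 / (2 * σ ^ 2)))
  rw [← this]
  apply tsum_congr
  intro j
  simp only [Equiv.neg_apply]
  push_cast
  ring_nf

lemma WN.gauss_mul (σ₁ σ₂ : ℝ) (h1 : 0 < σ₁) (h2 : 0 < σ₂) (a b x : ℝ) :
    gaussDensity a σ₁ x * gaussDensity b σ₂ x =
      (Real.exp (-(a - b) ^ 2 / (2 * (σ₁ ^ 2 + σ₂ ^ 2))) /
          Real.sqrt (2 * π * (σ₁ ^ 2 + σ₂ ^ 2))) *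
        gaussDensity ((a * σ₂ ^ 2 + b * σ₁ ^ 2) / (σ₁ ^ 2 + σ₂ ^ 2))
          (Real.sqrt (σ₁ ^ 2 * σ₂ ^ 2 / (σ₁ ^ 2 + σ₂ ^ 2))) x := by
  have hs : (0:ℝ) < σ₁ ^ 2 + σ₂ ^ 2 := by positivity
  set s := σ₁ ^ 2 + σ₂ ^ 2 with hs_def
  have hσb : (0:ℝ) < Real.sqrt (σ₁ ^ 2 * σ₂ ^ 2 / s) := by positivity
  have hσb2 : (Real.sqrt (σ₁ ^ 2 * σ₂ ^ 2 / s)) ^ 2 = σ₁ ^ 2 * σ₂ ^ 2 / s :=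
    Real.sq_sqrt (by positivity)
  have hpi := Real.pi_pos
  have hpre : (1 / (Real.sqrt (2 * π) * σ₁)) * (1 / (Real.sqrt (2 * π) * σ₂)) =
      (1 / Real.sqrt (2 * π * s)) *
        (1 / (Real.sqrt (2 * π) * Real.sqrt (σ₁ ^ 2 * σ₂ ^ 2 / s))) := by
    rw [show 2 * π * s = (2 * π) * s by ring, Real.sqrt_mul (x := 2 * π) (by positivity)]
    have hss : Real.sqrt s * Real.sqrt (σ₁ ^ 2 * σ₂ ^ 2 / s) = σ₁ * σ₂ := by
      rw [← Real.sqrt_mul hs.le]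
      rw [show s * (σ₁ ^ 2 * σ₂ ^ 2 / s) = (σ₁ * σ₂) ^ 2 by field_simp]
      exact Real.sqrt_sq (by positivity)
    have h2π : (0:ℝ) < Real.sqrt (2 * π) := by positivity
    have hsval : (0:ℝ) < Real.sqrt s := by positivity
    rw [one_div_mul_one_div, one_div_mul_one_div, show Real.sqrt (2 * π) * Real.sqrt s *
      (Real.sqrt (2 * π) * Real.sqrt (σ₁ ^ 2 * σ₂ ^ 2 / s)) = Real.sqrt (2 * π) * Real.sqrt (2 * π) *
      (Real.sqrt s * Real.sqrt (σ₁ ^ 2 * σ₂ ^ 2 / s)) by ring, hss]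
    ring
  have hexp : (-(x - a) ^ 2 / (2 * σ₁ ^ 2)) + (-(x - b) ^ 2 / (2 * σ₂ ^ 2)) =
      (-(a - b) ^ 2 / (2 * s)) +
        (-(x - (a * σ₂ ^ 2 + b * σ₁ ^ 2) / s) ^ 2 /
          (2 * (Real.sqrt (σ₁ ^ 2 * σ₂ ^ 2 / s)) ^ 2)) := by
    rw [hσb2]
    field_simp
    ring
  unfold gaussDensity
  rw [show (1 / (Real.sqrt (2*π) * σ₁)) * Real.exp (-(x-a)^2/(2*σ₁^2)) *
        ((1 / (Real.sqrt (2*π) * σ₂)) * Real.exp (-(x-b)^2/(2*σ₂^2)))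
      = ((1 / (Real.sqrt (2*π) * σ₁)) * (1 / (Real.sqrt (2*π) * σ₂))) *
        Real.exp ((-(x-a)^2/(2*σ₁^2)) + (-(x-b)^2/(2*σ₂^2))) by
      rw [Real.exp_add]; ring]
  rw [hpre, hexp, Real.exp_add]
  ring

/-- Uniform bound on a shifted Gaussian density on `(0, 2π]`. -/
lemma WN.gauss_bound (μ σ : ℝ) (hσ : 0 < σ) (j : ℤ) {x : ℝ}
    (hx : x ∈ Set.Ioc (0:ℝ) (2 * π)) :
    gaussDensity (μ + 2 * π * j) σ x ≤
      ((1 / (Real.sqrt (2 * π) * σ)) * Real.exp ((|μ| + 2 * π) ^ 2 / (2 * σ ^ 2))) *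
        Real.exp (-(2 * π ^ 2) / (2 * σ ^ 2)) ^ j.natAbs := by
  unfold gaussDensity
  have hre : ((1 / (Real.sqrt (2 * π) * σ)) * Real.exp ((|μ| + 2 * π) ^ 2 / (2 * σ ^ 2))) *
      Real.exp (-(2 * π ^ 2) / (2 * σ ^ 2)) ^ j.natAbs
      = (1 / (Real.sqrt (2 * π) * σ)) * Real.exp ((|μ| + 2 * π) ^ 2 / (2 * σ ^ 2) +
          (j.natAbs : ℝ) * (-(2 * π ^ 2) / (2 * σ ^ 2))) := by
    rw [← Real.exp_nat_mul, mul_assoc, ← Real.exp_add]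
  rw [hre]
  apply mul_le_mul_of_nonneg_left _ (by positivity)
  apply Real.exp_le_exp.2
  have hc : (0:ℝ) < 2 * σ ^ 2 := by positivity
  rw [div_le_iff₀ hc] at *
  have hA := WN.natAbs_le_sq j
  have hπ := Real.pi_pos
  have hx1 := hx.1
  have hx2 := hx.2
  have hμ1 := le_abs_self μ
  have hμ2 := neg_abs_le μ
  have habs := abs_nonneg μ
  have key : -(x - (μ + 2*π*j))^2 ≤ (x - μ)^2 - 2*π^2*(j:ℝ)^2 := by
    nlinarith [sq_nonneg ((x - μ) - π*j)]
  have hxb : (x - μ)^2 ≤ (|μ| + 2*π)^2 := by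
    nlinarith [mul_nonneg (by linarith : (0:ℝ) ≤ |μ| + 2*π - x + μ)
      (by linarith : (0:ℝ) ≤ |μ| + 2*π + x - μ)]
  have heq : ((|μ| + 2*π)^2/(2*σ^2) + (j.natAbs:ℝ) * (-(2*π^2)/(2*σ^2))) * (2*σ^2)
      = (|μ| + 2*π)^2 - 2*π^2*(j.natAbs:ℝ) := by
    field_simp; ring
  rw [heq]
  nlinarith

end Aux

set_option maxHeartbeats 1000000 in
/-- Normalization constant of the product of two wrapped normal densities. -/
theorem wn_product_normalization (μ₁ μ₂ σ₁ σ₂ : ℝ) (hσ₁ : 0 < σ₁) (hσ₂ : 0 < σ₂)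
    (μjk : ℤ → ℤ → ℝ) (σbar : ℝ) (w : ℤ → ℤ → ℝ)
    (hμjk : ∀ j k : ℤ, μjk j k =
      ((μ₁ + 2 * Real.pi * (j : ℝ)) * σ₂ ^ 2 + (μ₂ + 2 * Real.pi * (k : ℝ)) * σ₁ ^ 2) /
        (σ₁ ^ 2 + σ₂ ^ 2))
    (hσbar : σbar = Real.sqrt (σ₁ ^ 2 * σ₂ ^ 2 / (σ₁ ^ 2 + σ₂ ^ 2)))
    (hw : ∀ j k : ℤ, w j k =
      Real.exp (-((μ₁ + 2 * Real.pi * (j : ℝ)) - (μ₂ + 2 * Real.pi * (k : ℝ))) ^ 2 /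
          (2 * (σ₁ ^ 2 + σ₂ ^ 2))) / Real.sqrt (2 * Real.pi * (σ₁ ^ 2 + σ₂ ^ 2))) :
    ∫ x in (0 : ℝ)..(2 * Real.pi), wnDensity μ₁ σ₁ x * wnDensity μ₂ σ₂ x =
      ∑' p : ℤ × ℤ, w p.1 p.2 *
        ∫ x in (0 : ℝ)..(2 * Real.pi), gaussDensity (μjk p.1 p.2) σbar x := by
  have hπ := Real.pi_pos
  have h2π : (0:ℝ) ≤ 2 * Real.pi := by positivity
  set F : ℤ × ℤ → ℝ → ℝ := fun p x =>
    gaussDensity (μ₁ + 2 * Real.pi * p.1) σ₁ x * gaussDensity (μ₂ + 2 * Real.pi * p.2) σ₂ x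
    with hF
  -- pointwise product identity
  have hpt : ∀ x : ℝ, wnDensity μ₁ σ₁ x * wnDensity μ₂ σ₂ x = ∑' p : ℤ × ℤ, F p x := by
    intro x
    rw [WN.wn_eq μ₁ σ₁ x, WN.wn_eq μ₂ σ₂ x]
    have hn₁ : Summable fun j : ℤ => ‖gaussDensity (μ₁ + 2 * Real.pi * j) σ₁ x‖ := by
      have : (fun j : ℤ => ‖gaussDensity (μ₁ + 2 * Real.pi * j) σ₁ x‖)
          = fun j : ℤ => gaussDensity (μ₁ + 2 * Real.pi * j) σ₁ x :=
        funext fun j => Real.norm_of_nonneg (WN.gauss_nonneg _ _ _ hσ₁)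
      rw [this]; exact WN.summable_gauss μ₁ σ₁ x hσ₁
    have hn₂ : Summable fun j : ℤ => ‖gaussDensity (μ₂ + 2 * Real.pi * j) σ₂ x‖ := by
      have : (fun j : ℤ => ‖gaussDensity (μ₂ + 2 * Real.pi * j) σ₂ x‖)
          = fun j : ℤ => gaussDensity (μ₂ + 2 * Real.pi * j) σ₂ x :=
        funext fun j => Real.norm_of_nonneg (WN.gauss_nonneg _ _ _ hσ₂)
      rw [this]; exact WN.summable_gauss μ₂ σ₂ x hσ₂
    exact tsum_mul_tsum_of_summable_norm hn₁ hn₂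
  -- F in terms of w and gaussDensity
  have hFw : ∀ (p : ℤ × ℤ) (x : ℝ),
      F p x = w p.1 p.2 * gaussDensity (μjk p.1 p.2) σbar x := by
    intro p x
    rw [hF, hw, hμjk, hσbar]
    simpa [div_eq_mul_inv] using WN.gauss_mul σ₁ σ₂ hσ₁ hσ₂
      (μ₁ + 2 * Real.pi * p.1) (μ₂ + 2 * Real.pi * p.2) x
  -- integrability
  have hint : ∀ p : ℤ × ℤ, Integrable (F p)
      (volume.restrict (Set.Ioc (0:ℝ) (2 * Real.pi))) := fun p =>
    ((WN.gauss_continuous _ _).mul (WN.gauss_continuous _ _)).integrableOn_Ioc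
  -- summability of the integrals of norms
  have hsum : Summable fun p : ℤ × ℤ =>
      ∫ x in Set.Ioc (0:ℝ) (2 * Real.pi), ‖F p x‖ := by
    set B₁ : ℝ := (1 / (Real.sqrt (2 * Real.pi) * σ₁)) *
      Real.exp ((|μ₁| + 2 * Real.pi) ^ 2 / (2 * σ₁ ^ 2)) with hB₁
    set B₂ : ℝ := (1 / (Real.sqrt (2 * Real.pi) * σ₂)) *
      Real.exp ((|μ₂| + 2 * Real.pi) ^ 2 / (2 * σ₂ ^ 2)) with hB₂
    set r₁ : ℝ := Real.exp (-(2 * Real.pi ^ 2) / (2 * σ₁ ^ 2)) with hr₁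
    set r₂ : ℝ := Real.exp (-(2 * Real.pi ^ 2) / (2 * σ₂ ^ 2)) with hr₂
    have hr₁1 : r₁ < 1 := by
      rw [hr₁, Real.exp_lt_one_iff]
      apply div_neg_of_neg_of_pos (by nlinarith) (by positivity)
    have hr₂1 : r₂ < 1 := by
      rw [hr₂, Real.exp_lt_one_iff]
      apply div_neg_of_neg_of_pos (by nlinarith) (by positivity)
    have hgeo : Summable fun p : ℤ × ℤ =>
        (2 * Real.pi * (B₁ * B₂)) * (r₁ ^ p.1.natAbs * r₂ ^ p.2.natAbs) := by
      apply Summable.mul_left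
      exact (WN.summable_geo_int (Real.exp_pos _).le hr₁1).mul_of_nonneg
        (WN.summable_geo_int (Real.exp_pos _).le hr₂1)
        (fun j => by positivity) (fun j => by positivity)
    apply Summable.of_nonneg_of_le
      (fun p => integral_nonneg fun x => norm_nonneg _) (fun p => ?_) hgeo
    -- bound each integral
    have hC : ∀ x ∈ Set.Ioc (0:ℝ) (2 * Real.pi),
        ‖(fun y => ‖F p y‖) x‖ ≤ (B₁ * r₁ ^ p.1.natAbs) * (B₂ * r₂ ^ p.2.natAbs) := by
      intro x hx
      rw [norm_norm, Real.norm_of_nonneg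
        (mul_nonneg (WN.gauss_nonneg _ _ _ hσ₁) (WN.gauss_nonneg _ _ _ hσ₂))]
      exact mul_le_mul (by simpa [hB₁, hr₁, mul_assoc] using WN.gauss_bound μ₁ σ₁ hσ₁ p.1 hx)
        (by simpa [hB₂, hr₂, mul_assoc] using WN.gauss_bound μ₂ σ₂ hσ₂ p.2 hx)
        (WN.gauss_nonneg _ _ _ hσ₂) (by positivity)
    have hmeas : AEStronglyMeasurable (fun y => ‖F p y‖)
        (volume.restrict (Set.Ioc (0:ℝ) (2 * Real.pi))) :=
      ((WN.gauss_continuous _ _).mul (WN.gauss_continuous _ _)).norm.aestronglyMeasurable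
    have hfin : volume (Set.Ioc (0:ℝ) (2 * Real.pi)) < ⊤ := measure_Ioc_lt_top
    have := norm_setIntegral_le_of_norm_le_const_ae' hfin
      (Filter.Eventually.of_forall hC)
    calc ∫ x in Set.Ioc (0:ℝ) (2 * Real.pi), ‖F p x‖
        ≤ ‖∫ x in Set.Ioc (0:ℝ) (2 * Real.pi), ‖F p x‖‖ := le_abs_self _
      _ ≤ (B₁ * r₁ ^ p.1.natAbs) * (B₂ * r₂ ^ p.2.natAbs) *
            (volume (Set.Ioc (0:ℝ) (2 * Real.pi))).toReal := this
      _ = 2 * Real.pi * (B₁ * B₂) * (r₁ ^ p.1.natAbs * r₂ ^ p.2.natAbs) := by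
          rw [Real.volume_Ioc]
          rw [ENNReal.toReal_ofReal (by linarith)]
          ring
  -- main computation
  rw [intervalIntegral.integral_of_le h2π]
  rw [setIntegral_congr_fun measurableSet_Ioc (fun x _ => hpt x)]
  rw [← integral_tsum_of_summable_integral_norm hint hsum]
  apply tsum_congr
  intro p
  rw [intervalIntegral.integral_of_le h2π]
  rw [setIntegral_congr_fun measurableSet_Ioc (fun x _ => hFw p x)]
  exact integral_const_mul _ _
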